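/- Let c ≠ 0, a > 0, and μ + σ < 0. Suppose u is continuous on ℝ, continuously differentiable on [0,∞), solves the model DDE for all t ≥ 0, and the initial function satisfies c φ(0) ≥ −a. Then t − a − c u(t) < t for all t > 0; that is, a + c u(t) > 0 for all t > 0. -/

import Mathlib

open Set Filter Topology

/-- A solution of the model state-dependent DDE
`u'(t) = μ u(t) + σ u(t - a - c u(t))` for `t ≥ 0`, with initial function `φ` on `(-∞,0]`. -/
def IsModelSolution (μ σ c a : ℝ) (φ u : ℝ → ℝ) : Prop :=
  Continuous u ∧ (∀ t ≤ (0 : ℝ), u t = φ t) ∧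
    ∀ t, (0 : ℝ) ≤ t →
      HasDerivWithinAt u (μ * u t + σ * u (t - a - c * u t)) (Set.Ici (0 : ℝ)) t

/-- Lemma 3.1 of Humphries–Magpantay: the deviating argument is a delay. -/
theorem stmt_4 (μ σ c a : ℝ) (hc : c ≠ 0) (ha : 0 < a) (hμσ : μ + σ < 0)
    (φ u : ℝ → ℝ) (hsol : IsModelSolution μ σ c a φ u)
    (hφ0 : -a ≤ c * φ 0) :
    ∀ t > (0 : ℝ), t - a - c * u t < t := by
  obtain ⟨hu_cont, hu_init, hu_deriv⟩ := hsol
  set g : ℝ → ℝ := fun t => a + c * u t with hg_def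
  have hg_cont : Continuous g := continuous_const.add (continuous_const.mul hu_cont)
  have hg0 : 0 ≤ g 0 := by
    have h := hu_init 0 le_rfl
    simp only [hg_def, h]
    linarith
  have hd_pos : 0 < -a * (μ + σ) := by nlinarith
  -- derivative of g at any zero of g is `-a * (μ + σ) > 0`
  have key : ∀ s, 0 ≤ s → g s = 0 → HasDerivWithinAt g (-a * (μ + σ)) (Ici 0) s := by
    intro s hs hgs
    have hgs' : a + c * u s = 0 := hgs
    have hus : u s = -a / c := by field_simp; linarith
    have harg : s - a - c * u s = s := by linarith
    have h := ((hu_deriv s hs).const_mul c).const_add a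
    refine h.congr_deriv ?_
    rw [harg, hus]
    field_simp
    ring
  -- positivity of g just to the right of a zero
  have right_pos : ∀ s, 0 ≤ s → g s = 0 → ∀ᶠ t in 𝓝[>] s, 0 < g t := by
    intro s hs hgs
    have hder := key s hs hgs
    have hslope : Tendsto (slope g s) (𝓝[>] s) (𝓝 (-a * (μ + σ))) := by
      have h := hasDerivWithinAt_iff_tendsto_slope.mp hder
      exact h.mono_left (nhdsWithin_mono s fun t ht =>
        ⟨le_trans hs (le_of_lt ht), ne_of_gt ht⟩)
    have h1 : ∀ᶠ t in 𝓝[>] s, 0 < slope g s t :=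
      hslope.eventually (eventually_gt_nhds hd_pos)
    filter_upwards [h1, self_mem_nhdsWithin] with t ht hts
    rw [slope_def_field] at ht
    have hts' : 0 < t - s := sub_pos.mpr hts
    rcases div_pos_iff.mp ht with ⟨h2, _⟩ | ⟨_, h3⟩
    · linarith [hgs ▸ h2]
    · linarith
  -- negativity of g just to the left of a positive zero
  have left_neg : ∀ s, 0 < s → g s = 0 → ∀ᶠ t in 𝓝[<] s, g t < 0 := by
    intro s hs hgs
    have hder : HasDerivAt g (-a * (μ + σ)) s :=
      (key s hs.le hgs).hasDerivAt (mem_of_superset (Ioi_mem_nhds hs) Ioi_subset_Ici_self)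
    have hslope : Tendsto (slope g s) (𝓝[<] s) (𝓝 (-a * (μ + σ))) :=
      (hasDerivAt_iff_tendsto_slope.mp hder).mono_left
        (nhdsWithin_mono s fun t ht => ne_of_lt ht)
    have h1 : ∀ᶠ t in 𝓝[<] s, 0 < slope g s t :=
      hslope.eventually (eventually_gt_nhds hd_pos)
    filter_upwards [h1, self_mem_nhdsWithin] with t ht hts
    rw [slope_def_field] at ht
    have hts' : t - s < 0 := sub_neg.mpr hts
    rcases div_pos_iff.mp ht with ⟨_, h2⟩ | ⟨h3, _⟩
    · linarith
    · linarith [hgs ▸ h3]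
  -- main claim: g is positive on (0, ∞)
  have main : ∀ t, 0 < t → 0 < g t := by
    by_contra hmain
    push_neg at hmain
    obtain ⟨t₁, ht₁, hgt₁⟩ := hmain
    have hpos0 : ∀ᶠ t in 𝓝[>] (0:ℝ), 0 < g t := by
      rcases eq_or_lt_of_le hg0 with h0 | h0
      · exact right_pos 0 le_rfl h0.symm
      · exact (hg_cont.continuousAt.eventually (eventually_gt_nhds h0)).filter_mono
          nhdsWithin_le_nhds
    obtain ⟨δ, hδ, hδsub⟩ := mem_nhdsGT_iff_exists_Ioc_subset.mp hpos0
    rw [mem_Ioi] at hδ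
    have hδt₁ : δ < t₁ := by
      by_contra h
      push_neg at h
      exact absurd (hδsub ⟨ht₁, h⟩) (not_lt.mpr hgt₁)
    set K : Set ℝ := Icc δ t₁ ∩ {t | g t ≤ 0} with hK_def
    have hKcomp : IsCompact K :=
      isCompact_Icc.inter_right (isClosed_le hg_cont continuous_const)
    have hKne : K.Nonempty := ⟨t₁, ⟨hδt₁.le, le_rfl⟩, hgt₁⟩
    set t₀ := sInf K with ht₀_def
    have ht₀K : t₀ ∈ K := hKcomp.sInf_mem hKne
    have ht₀pos : 0 < t₀ := lt_of_lt_of_le hδ ht₀K.1.1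
    have P : ∀ t ∈ Ioo (0:ℝ) t₀, 0 < g t := by
      rintro t ⟨ht0, htt₀⟩
      by_cases h : t ≤ δ
      · exact hδsub ⟨ht0, h⟩
      · push_neg at h
        by_contra hle
        push_neg at hle
        have htK : t ∈ K := ⟨⟨h.le, le_trans htt₀.le ht₀K.1.2⟩, hle⟩
        exact absurd (csInf_le hKcomp.bddBelow htK) (not_le.mpr htt₀)
    have hIoo : Ioo (0:ℝ) t₀ ∈ 𝓝[<] t₀ := Ioo_mem_nhdsLT_of_mem ⟨ht₀pos, le_rfl⟩
    have hgt₀0 : g t₀ = 0 := by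
      refine le_antisymm ht₀K.2 ?_
      have htend : Tendsto g (𝓝[<] t₀) (𝓝 (g t₀)) :=
        hg_cont.continuousAt.mono_left nhdsWithin_le_nhds
      exact ge_of_tendsto htend (eventually_of_mem hIoo fun t ht => (P t ht).le)
    have hleft := left_neg t₀ ht₀pos hgt₀0
    obtain ⟨t, htneg, htmem⟩ := (hleft.and (eventually_of_mem hIoo fun t ht => ht)).exists
    exact absurd (P t htmem) (not_lt.mpr htneg.le)
  intro t ht
  have h := main t ht
  simp only [hg_def] at h
  linarith
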